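/- Let C be a semidualizing R-module and r_1, ..., r_n a sequence of elements of R. Then r_1, ..., r_n is a regular R-sequence if and only if it is a regular C-sequence. -/

import Mathlib

open CategoryTheory

universe u

variable (R : Type u) [CommRing R]

/-- `M` has the `t(p)`-property. -/
def HasTProperty (p : Ideal R) (M : Type u) [AddCommGroup M] [Module R M] : Prop :=
  (∀ r : R, r ∉ p → Function.Bijective (fun x : M => r • x)) ∧
    ∀ x : M, ∃ m : ℕ, 1 ≤ m ∧ ∀ a ∈ p ^ m, a • x = 0

/-- `E` is an injective envelope of `M`. -/
def IsInjectiveEnvelope (M E : Type u) [AddCommGroup M] [Module R M]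
    [AddCommGroup E] [Module R E] : Prop :=
  Module.Injective R E ∧ ∃ f : M →ₗ[R] E, Function.Injective f ∧
    ∀ N : Submodule R E, N ≠ ⊥ → N ⊓ LinearMap.range f ≠ ⊥

/-- `C` is a semidualizing `R`-module. -/
def IsSemidualizing (C : Type u) [AddCommGroup C] [Module R C] : Prop :=
  Module.Finite R C ∧ Function.Bijective (LinearMap.lsmul R C) ∧
    ∀ i : ℕ, 0 < i → Subsingleton
      (((Ext R (ModuleCat.{u} R) i).obj
        (Opposite.op (ModuleCat.of R C))).obj (ModuleCat.of R C))

/-- `C` has finite injective dimension over `R`. -/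
def HasFiniteInjectiveDimension (C : Type u) [AddCommGroup C] [Module R C] : Prop :=
  ∃ n : ℕ, ∀ (N : ModuleCat.{u} R) (i : ℕ), n < i →
    Subsingleton (((Ext R (ModuleCat.{u} R) i).obj (Opposite.op N)).obj (ModuleCat.of R C))

/-- `C` is a dualizing `R`-module. -/
def IsDualizing (C : Type u) [AddCommGroup C] [Module R C] : Prop :=
  IsSemidualizing R C ∧ HasFiniteInjectiveDimension R C

/-- `M` is `C`-injective. -/
def IsCInjective (C : Type u) [AddCommGroup C] [Module R C]
    (M : Type u) [AddCommGroup M] [Module R M] : Prop :=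
  ∃ (I : Type u) (_ : AddCommGroup I) (_ : Module R I),
    Module.Injective R I ∧ Nonempty (M ≃ₗ[R] (C →ₗ[R] I))

/-- `Tor_i^R(M,N)` as a module category object. -/
noncomputable def TorMod (i : ℕ) (M N : Type u) [AddCommGroup M] [Module R M]
    [AddCommGroup N] [Module R N] : ModuleCat.{u} R :=
  ((Tor (ModuleCat.{u} R) i).obj (ModuleCat.of R M)).obj (ModuleCat.of R N)

/-- The Krull dimension of a module, as dimension of `R ⧸ Ann M`. -/
noncomputable def moduleKrullDim (M : Type u) [AddCommGroup M] [Module R M] :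
    WithBot (WithTop ℕ) :=
  ringKrullDim (R ⧸ Module.annihilator R M)


/-! ### Auxiliary material for `stmt7` -/

set_option linter.unusedSectionVars false

section Stmt7Aux

variable {R}

/-- Functional lemma: a f.g. module over a domain with an element with trivial
annihilator admits a linear functional not vanishing on that element. -/
lemma exists_functional {D : Type u} [CommRing D] [IsDomain D] {N : Type u}
    [AddCommGroup N] [Module D N] [Module.Finite D N] (z : N)
    (hz : ∀ a : D, a • z = 0 → a = 0) : ∃ ψ : N →ₗ[D] D, ψ z ≠ 0 := by
  classical
  let S := nonZeroDivisors D
  let F := FractionRing D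
  let NF := LocalizedModule S N
  have hDF : Function.Injective (algebraMap D F) := IsFractionRing.injective D F
  -- the image of `z` is nonzero
  set v : NF := LocalizedModule.mkLinearMap S N z with hv_def
  have hv : v ≠ 0 := by
    intro h
    obtain ⟨s', hs'⟩ := (IsLocalizedModule.eq_zero_iff S (LocalizedModule.mkLinearMap S N)).mp h
    exact nonZeroDivisors.coe_ne_zero s' (hz _ hs')
  -- a functional over the fraction field
  obtain ⟨W, hW⟩ := Submodule.exists_isCompl (Submodule.span F {v})
  let e : F ≃ₗ[F] Submodule.span F {v} := LinearEquiv.toSpanNonzeroSingleton F NF v hv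
  let lam : NF →ₗ[F] F :=
    (e.symm : Submodule.span F {v} →ₗ[F] F).comp (Submodule.linearProjOfIsCompl _ W hW)
  have hlam : lam v = 1 := by
    have h1 : (Submodule.linearProjOfIsCompl _ W hW) v
        = ⟨v, Submodule.mem_span_singleton_self v⟩ :=
      Submodule.linearProjOfIsCompl_apply_left hW ⟨v, Submodule.mem_span_singleton_self v⟩
    have h2 : e 1 = ⟨v, Submodule.mem_span_singleton_self v⟩ := by
      apply Subtype.ext
      simp [e, LinearEquiv.toSpanNonzeroSingleton]
    simp only [lam, LinearMap.comp_apply, h1, ← h2, LinearEquiv.coe_coe,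
      LinearEquiv.symm_apply_apply]
  let psi0 : N →ₗ[D] F := (lam.restrictScalars D).comp (LocalizedModule.mkLinearMap S N)
  have hpsi0 : psi0 z = 1 := hlam
  -- clear denominators
  obtain ⟨t, ht⟩ : ∃ t : Finset N, Submodule.span D (t : Set N) = ⊤ :=
    Module.Finite.fg_top (R := D) (M := N)
  obtain ⟨b, hb⟩ := IsLocalization.exist_integer_multiples S t (fun n : N => psi0 n)
  let psi1 : N →ₗ[D] F := (b : D) • psi0
  have hmem : ∀ n : N, psi1 n ∈ LinearMap.range (Algebra.linearMap D F) := by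
    intro n
    have : n ∈ Submodule.span D (t : Set N) := ht ▸ Submodule.mem_top
    induction this using Submodule.span_induction with
    | mem x hx =>
        obtain ⟨c, hc⟩ := hb x hx
        exact ⟨c, hc⟩
    | zero => exact ⟨0, by simp⟩
    | add x y _ _ hx hy =>
        obtain ⟨cx, hcx⟩ := hx; obtain ⟨cy, hcy⟩ := hy
        exact ⟨cx + cy, by simp [map_add, hcx, hcy]⟩
    | smul a x _ hx =>
        obtain ⟨c, hc⟩ := hx
        refine ⟨a * c, ?_⟩
        simp only [map_smul, Algebra.linearMap_apply] at hc ⊢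
        rw [map_mul, hc, ← Algebra.smul_def]
  let eA : D ≃ₗ[D] LinearMap.range (Algebra.linearMap D F) :=
    LinearEquiv.ofInjective (Algebra.linearMap D F) hDF
  refine ⟨(eA.symm : _ →ₗ[D] D).comp (psi1.codRestrict _ hmem), ?_⟩
  intro h0
  have hb0 : (b : D) ≠ 0 := nonZeroDivisors.coe_ne_zero b
  have : psi1 z = algebraMap D F (b : D) := by
    simp only [psi1, LinearMap.smul_apply, hpsi0, smul_eq_mul, mul_one, Algebra.smul_def]
  apply hb0
  have h1 : (psi1.codRestrict _ hmem) z = eA 0 := by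
    rw [← h0]; simp
  have h2 : psi1 z = 0 := by
    have := congrArg (Subtype.val) h1
    simpa [eA] using this
  apply hDF
  rw [← this, h2, map_zero]

/-- Transfer of non-zerodivisor property from the base to a module whose
endomorphisms are all scalars. -/
lemma nzd_transfer {R : Type u} [CommRing R] [IsNoetherianRing R] {M : Type u}
    [AddCommGroup M] [Module R M] [Module.Finite R M] (I : Ideal R)
    (hIM : ∀ a ∈ I, ∀ m : M, a • m = 0)
    (hfaith : ∀ s : R, (∀ m : M, s • m = 0) → s ∈ I)
    (hendo : ∀ f : M →ₗ[R] M, ∃ s : R, ∀ m, f m = s • m)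
    {r : R} (hr : ∀ s, r * s ∈ I → s ∈ I) :
    ∀ x : M, r • x = 0 → x = 0 := by
  intro x hxr
  by_contra hx
  obtain ⟨P, hP, hle⟩ := exists_le_isAssociatedPrime_of_isNoetherianRing R x hx
  obtain ⟨hprime, y, hy⟩ := isAssociatedPrime_iff.mp hP
  have hrP : r ∈ P := hle (Submodule.mem_colon_singleton.mpr ((Submodule.mem_bot R).mpr hxr))
  have hIP : I ≤ P := fun a ha =>
    hle (Submodule.mem_colon_singleton.mpr ((Submodule.mem_bot R).mpr (hIM a ha x)))
  have hy0 : y ≠ 0 := by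
    rintro rfl
    refine hprime.ne_top ?_
    rw [hy, Submodule.colon_singleton_zero]
  have hPy : ∀ a : R, a ∈ P ↔ a • y = 0 := fun a => by
    rw [hy, Submodule.mem_colon_singleton, Submodule.mem_bot]
  -- find an element of `M` which is not torsion modulo `P`
  have hz : ∃ z : M, ∀ a : R, a • z ∈ (P • ⊤ : Submodule R M) → a ∈ P := by
    by_contra h
    push_neg at h
    obtain ⟨t, ht⟩ : ∃ t : Finset M, Submodule.span R (t : Set M) = ⊤ :=
      Module.Finite.fg_top (R := R) (M := M)
    choose a ha₁ ha₂ using h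
    classical
    set b := ∏ m ∈ t, a m with hb_def
    have hbP : b ∉ P := by
      intro hb
      obtain ⟨m, -, hm⟩ := (Ideal.IsPrime.prod_mem_iff (hp := hprime)).mp hb
      exact ha₂ m hm
    have hbM : ∀ m : M, b • m ∈ (P • ⊤ : Submodule R M) := by
      intro m
      have hm : m ∈ Submodule.span R (t : Set M) := ht ▸ Submodule.mem_top
      induction hm using Submodule.span_induction with
      | mem u hu =>
          rw [hb_def, ← Finset.mul_prod_erase t a hu, mul_comm (a u), mul_smul]
          exact Submodule.smul_mem _ _ (ha₁ u)
      | zero => simp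
      | add u v _ _ hu hv => rw [smul_add]; exact Submodule.add_mem _ hu hv
      | smul c u _ hu => rw [smul_comm]; exact Submodule.smul_mem _ _ hu
    have hrange : LinearMap.range (b • (LinearMap.id : M →ₗ[R] M)) ≤ P • ⊤ := by
      rintro _ ⟨m, rfl⟩; exact hbM m
    obtain ⟨p, hmonic, -, hcoeff, heval⟩ :=
      LinearMap.exists_monic_and_natDegree_eq_and_coeff_mem_pow_and_aeval_eq_zero R
        (b • (LinearMap.id : M →ₗ[R] M)) P hrange
    have hev : ∀ m : M, (Polynomial.eval b p) • m = 0 := by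
      intro m
      have h1 : (b • (LinearMap.id : M →ₗ[R] M)) = algebraMap R (Module.End R M) b := by
        ext m; simp [Module.algebraMap_end_eq_smul_id]
      rw [h1, Polynomial.aeval_algebraMap_apply] at heval
      rw [show (Polynomial.aeval b) p = Polynomial.eval b p from rfl] at heval
      rw [Module.algebraMap_end_eq_smul_id] at heval
      have := congrArg (fun f : Module.End R M => f m) heval
      simpa using this
    have hevP : Polynomial.eval b p ∈ P := hIP (hfaith _ hev)
    set n := p.natDegree with hn
    have hsum : Polynomial.eval b p
        = ∑ k ∈ Finset.range (n + 1), p.coeff k * b ^ k :=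
      Polynomial.eval_eq_sum_range (p := p) b
    have hbn : b ^ n ∈ P := by
      have h2 : ∑ k ∈ Finset.range n, p.coeff k * b ^ k ∈ P := by
        refine Ideal.sum_mem _ fun k hk => Ideal.mul_mem_right _ _ ?_
        have hk' := Finset.mem_range.mp hk
        have : p.coeff k ∈ P ^ (n - k) := hcoeff k
        exact Ideal.pow_le_self (by omega) this
      have h3 : b ^ n = Polynomial.eval b p - ∑ k ∈ Finset.range n, p.coeff k * b ^ k := by
        rw [hsum, Finset.sum_range_succ, hmonic.coeff_natDegree, one_mul]; ring
      rw [h3]; exact Ideal.sub_mem _ hevP h2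
    exact hbP (hprime.mem_of_pow_mem n hbn)
  obtain ⟨z, hz⟩ := hz
  -- set up the quotient module over the quotient domain
  haveI := hprime
  let D := R ⧸ P
  let N := M ⧸ (P • ⊤ : Submodule R M)
  haveI : Module.Finite R N := Module.Finite.quotient R _
  haveI : Module.Finite D N := Module.Finite.of_restrictScalars_finite R D N
  have hzbar : ∀ a : D, a • (Submodule.Quotient.mk z : N) = 0 → a = 0 := by
    intro a ha
    obtain ⟨a₀, rfl⟩ := Ideal.Quotient.mk_surjective a
    rw [Module.Quotient.mk_smul_mk] at ha
    rw [Submodule.Quotient.mk_eq_zero] at ha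
    exact (Ideal.Quotient.eq_zero_iff_mem).mpr (hz a₀ ha)
  obtain ⟨ψ, hψ⟩ := exists_functional (Submodule.Quotient.mk z : N) hzbar
  -- build an endomorphism of `M`
  let ι : D →ₗ[R] M := P.liftQ (LinearMap.toSpanSingleton R M y)
    (fun a ha => by simpa [LinearMap.toSpanSingleton] using (hPy a).mp ha)
  have hι : ∀ d : D, ι d = 0 → d = 0 := by
    intro d hd
    obtain ⟨a, rfl⟩ := Ideal.Quotient.mk_surjective d
    rw [show (Ideal.Quotient.mk P a : D) = Submodule.Quotient.mk a from rfl,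
      Submodule.liftQ_apply] at hd
    simp only [LinearMap.toSpanSingleton_apply] at hd
    exact (Ideal.Quotient.eq_zero_iff_mem).mpr ((hPy a).mpr hd)
  let Ψ : M →ₗ[R] M := ι ∘ₗ (ψ.restrictScalars R) ∘ₗ (P • (⊤ : Submodule R M)).mkQ
  obtain ⟨s, hs⟩ := hendo Ψ
  have hΨz : Ψ z ≠ 0 := fun h => hψ (by
    have := hι _ h
    simpa using this)
  have hsI : s ∉ I := fun hsI => hΨz (by rw [hs z]; exact hIM s hsI z)
  have hrs : r * s ∈ I := by
    refine hfaith _ fun m => ?_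
    have h1 : (r * s) • m = r • Ψ m := by rw [mul_smul, hs m]
    have h2 : r • Ψ m = ι (r • (ψ ((P • (⊤ : Submodule R M)).mkQ m))) := by
      simp [Ψ, LinearMap.map_smul]
    have h3 : r • (ψ ((P • (⊤ : Submodule R M)).mkQ m)) = 0 := by
      obtain ⟨a, ha⟩ := Ideal.Quotient.mk_surjective (ψ ((P • (⊤ : Submodule R M)).mkQ m))
      rw [← ha, show (Ideal.Quotient.mk P a : D) = Submodule.Quotient.mk a from rfl,
        ← Submodule.Quotient.mk_smul]
      rw [Submodule.Quotient.mk_eq_zero]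
      exact P.mul_mem_right a hrP
    rw [h1, h2, h3, map_zero]
  exact hsI (hr s hrs)

section Helpers

variable {A B M N : Type u} [AddCommGroup A] [Module R A] [AddCommGroup B] [Module R B]
  [AddCommGroup M] [Module R M] [AddCommGroup N] [Module R N]

/-- Divide a linear map by a regular element. -/
lemma exists_smul_eq_of_regular {r : R} (hr : ∀ m : M, r • m = 0 → m = 0)
    (f : A →ₗ[R] M) (h : ∀ a, ∃ m, r • m = f a) :
    ∃ g : A →ₗ[R] M, ∀ a, r • g a = f a := by
  classical
  have key : ∀ a, r • (Classical.choose (h a)) = f a := fun a => Classical.choose_spec (h a)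
  refine ⟨{ toFun := fun a => Classical.choose (h a), map_add' := ?_, map_smul' := ?_ }, key⟩
  · intro a b
    have : r • (Classical.choose (h (a + b)) - (Classical.choose (h a) + Classical.choose (h b)))
        = 0 := by
      rw [smul_sub, smul_add, key, key, key, map_add]; abel
    have := hr _ this
    rwa [sub_eq_zero] at this
  · intro c a
    have : r • (Classical.choose (h (c • a)) - c • Classical.choose (h a)) = 0 := by
      rw [smul_sub, key, smul_comm, key, map_smul]; abel
    have := hr _ this
    rw [sub_eq_zero] at this
    simpa using this

/-- Factor a linear map through a surjection it kills the kernel of. -/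
lemma exists_factor_of_surjective (p : A →ₗ[R] B) (hp : Function.Surjective p)
    (g : A →ₗ[R] N) (h : ∀ a, p a = 0 → g a = 0) :
    ∃ g' : B →ₗ[R] N, g' ∘ₗ p = g := by
  classical
  have hker : ∀ a b : A, p a = p b → g a = g b := by
    intro a b hab
    have : g (a - b) = 0 := h _ (by rw [map_sub, hab, sub_self])
    rw [map_sub, sub_eq_zero] at this; exact this
  let sec := fun b => Classical.choose (hp b)
  have hsec : ∀ b, p (sec b) = b := fun b => Classical.choose_spec (hp b)
  refine ⟨{ toFun := fun b => g (sec b), map_add' := ?_, map_smul' := ?_ }, ?_⟩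
  · intro a b
    rw [← map_add g]
    exact hker _ _ (by rw [map_add, hsec, hsec, hsec])
  · intro c a
    rw [RingHom.id_apply, ← map_smul g]
    exact hker _ _ (by rw [map_smul, hsec, hsec])
  · ext a
    exact hker _ _ (hsec (p a))

end Helpers

section Res

variable {C : Type u} [AddCommGroup C] [Module R C]
variable (P : ProjectiveResolution (ModuleCat.of R C))

lemma hom_apply_eq {A B : ModuleCat.{u} R} {f g : A ⟶ B} (h : f = g) (x : A) :
    f x = g x := congrArg (fun t : A ⟶ B => t x) h

/-- Concrete statement that `Ext^{k+1}(C, N) = 0` with respect to the resolution `P`. -/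
def ELift (k : ℕ) (N : ModuleCat.{u} R) : Prop :=
  ∀ φ : P.complex.X (k + 1) ⟶ N, P.complex.d (k + 2) (k + 1) ≫ φ = 0 →
    ∃ ψ : P.complex.X k ⟶ N, P.complex.d (k + 1) k ≫ ψ = φ

noncomputable def aug : P.complex.X 0 ⟶ ModuleCat.of R C :=
  P.π.f 0 ≫ (HomologicalComplex.singleObjXSelf (ComplexShape.down ℕ) 0 (ModuleCat.of R C)).hom

lemma aug_surjective : Function.Surjective (aug P) := by
  rw [← ModuleCat.epi_iff_surjective]
  exact epi_comp _ _

lemma d_comp_aug : P.complex.d 1 0 ≫ aug P = 0 := by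
  rw [aug, ← Category.assoc, P.complex_d_comp_π_f_zero, Limits.zero_comp]

lemma exact_aug : ∀ x : P.complex.X 0, aug P x = 0 → ∃ y, P.complex.d 1 0 y = x := by
  intro x hx
  apply (ShortComplex.moduleCat_exact_iff _).mp P.exact₀ x
  show (P.π.f 0) x = 0
  have hinj : Function.Injective ((HomologicalComplex.singleObjXSelf (ComplexShape.down ℕ) 0
      (ModuleCat.of R C)).hom) := by
    rw [← ModuleCat.mono_iff_injective]; infer_instance
  apply hinj
  rw [map_zero]
  exact hx

lemma exact_succ' (n : ℕ) :
    ∀ x : P.complex.X (n + 1), P.complex.d (n + 1) n x = 0 →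
      ∃ y, P.complex.d (n + 2) (n + 1) y = x := by
  intro x hx
  exact (ShortComplex.moduleCat_exact_iff _).mp (P.exact_succ n) x hx

lemma eLift_of_subsingleton_ext (k : ℕ)
    (h : Subsingleton (((Ext R (ModuleCat.{u} R) (k + 1)).obj
      (Opposite.op (ModuleCat.of R C))).obj (ModuleCat.of R C))) :
    ELift P k (ModuleCat.of R C) := by
  haveI := h
  have hz : Limits.IsZero (((Ext R (ModuleCat.{u} R) (k + 1)).obj
      (Opposite.op (ModuleCat.of R C))).obj (ModuleCat.of R C)) :=
    ModuleCat.isZero_of_subsingleton _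
  have hzh : Limits.IsZero ((P.complex.linearYonedaObj R (ModuleCat.of R C)).homology (k + 1)) :=
    Limits.IsZero.of_iso hz (P.isoExt (k + 1) (ModuleCat.of R C)).symm
  have hex : (P.complex.linearYonedaObj R (ModuleCat.of R C)).ExactAt (k + 1) :=
    (HomologicalComplex.exactAt_iff_isZero_homology _ _).mpr hzh
  rw [HomologicalComplex.exactAt_iff' _ k (k + 1) (k + 2) (by simp) (by simp)] at hex
  have hex' := (ShortComplex.moduleCat_exact_iff _).mp hex
  intro φ hφ
  have hc : ((P.complex.linearYonedaObj R (ModuleCat.of R C)).d (k + 1) (k + 2)) φ = 0 := by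
    simp only [ChainComplex.linearYonedaObj_d]; exact hφ
  obtain ⟨ψ, hψ⟩ := hex' φ hc
  refine ⟨ψ, ?_⟩
  have h2 : ((P.complex.linearYonedaObj R (ModuleCat.of R C)).d k (k + 1)) ψ = φ := hψ
  simp only [ChainComplex.linearYonedaObj_d] at h2; exact h2


/-- The invariant carried along the induction: `Hom(C,C/IC) = R/I` and
`Ext^i(C, C/IC) = 0` for `i ≥ 1`, stated concretely. -/
structure SemiGood (I : Ideal R) : Prop where
  a : ∀ s : R, (∀ c : C, s • c ∈ (I • ⊤ : Submodule R C)) → s ∈ I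
  b : ∀ f : C →ₗ[R] (C ⧸ (I • ⊤ : Submodule R C)), ∃ s : R,
        ∀ c : C, f c = s • Submodule.Quotient.mk c
  e : ∀ k : ℕ, ELift P k (ModuleCat.of R (C ⧸ (I • ⊤ : Submodule R C)))

lemma mem_sup_span_smul {I : Ideal R} {r : R} {c : C} :
    c ∈ ((I ⊔ Ideal.span {r}) • ⊤ : Submodule R C) ↔
      ∃ m : C, c - r • m ∈ (I • ⊤ : Submodule R C) := by
  rw [Submodule.sup_smul, Submodule.ideal_span_singleton_smul]
  constructor
  · intro h
    obtain ⟨y, hy, z, hz, hyz⟩ := Submodule.mem_sup.mp h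
    rw [← SetLike.mem_coe, Submodule.coe_pointwise_smul] at hz
    obtain ⟨m, -, rfl⟩ := hz
    exact ⟨m, by rw [← hyz]; simpa using hy⟩
  · rintro ⟨m, hm⟩
    have h1 : c = (c - r • m) + r • m := by abel
    rw [h1]
    exact Submodule.add_mem _ (Submodule.mem_sup_left hm)
      (Submodule.mem_sup_right (Submodule.smul_mem_pointwise_smul m r ⊤ Submodule.mem_top))

section Step

variable (I : Ideal R) (r : R)

/-- The comparison map `C/IC → C/JC` where `J = I + (r)`. -/
noncomputable def qmap :
    (C ⧸ (I • ⊤ : Submodule R C)) →ₗ[R]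
      (C ⧸ ((I ⊔ Ideal.span {r}) • ⊤ : Submodule R C)) :=
  Submodule.liftQ _ ((((I ⊔ Ideal.span {r}) • ⊤ : Submodule R C)).mkQ)
    (by rw [Submodule.ker_mkQ]; exact Submodule.smul_mono_left le_sup_left)

variable {I r}

lemma qmap_mk (c : C) :
    qmap I r (Submodule.Quotient.mk c)
      = (Submodule.Quotient.mk c : C ⧸ ((I ⊔ Ideal.span {r}) • ⊤ : Submodule R C)) :=
  rfl

lemma qmap_surjective : Function.Surjective (qmap (C := C) I r) := by
  intro y
  obtain ⟨c, rfl⟩ := Submodule.Quotient.mk_surjective _ y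
  exact ⟨Submodule.Quotient.mk c, rfl⟩

lemma qmap_ker {x : C ⧸ (I • ⊤ : Submodule R C)} (h : qmap I r x = 0) :
    ∃ y : C ⧸ (I • ⊤ : Submodule R C), r • y = x := by
  obtain ⟨c, rfl⟩ := Submodule.Quotient.mk_surjective _ x
  rw [qmap_mk, Submodule.Quotient.mk_eq_zero, mem_sup_span_smul] at h
  obtain ⟨m, hm⟩ := h
  refine ⟨Submodule.Quotient.mk m, ?_⟩
  rw [← Submodule.Quotient.mk_smul]
  exact ((Submodule.Quotient.eq _).mpr hm).symm

lemma smul_mk_sup_zero (x : C ⧸ ((I ⊔ Ideal.span {r}) • ⊤ : Submodule R C)) : r • x = 0 := by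
  obtain ⟨c, rfl⟩ := Submodule.Quotient.mk_surjective _ x
  rw [← Submodule.Quotient.mk_smul, Submodule.Quotient.mk_eq_zero]
  exact Submodule.smul_mem_smul (Ideal.mem_sup_right (Ideal.mem_span_singleton_self r))
    Submodule.mem_top

lemma smul_hom_sup_zero {A : ModuleCat.{u} R}
    (f : A ⟶ ModuleCat.of R (C ⧸ ((I ⊔ Ideal.span {r}) • ⊤ : Submodule R C))) :
    r • f = 0 := by
  ext x
  simp only [ModuleCat.hom_smul, ModuleCat.hom_zero, LinearMap.smul_apply, LinearMap.zero_apply]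
  exact smul_mk_sup_zero (f x)

lemma semiGood_step (G : SemiGood P I)
    (hr : ∀ x : C ⧸ (I • ⊤ : Submodule R C), r • x = 0 → x = 0) :
    SemiGood P (I ⊔ Ideal.span {r}) := by
  classical
  haveI hepi : Epi (ModuleCat.ofHom (qmap (C := C) I r)) :=
    (ModuleCat.epi_iff_surjective _).mpr qmap_surjective
  set q : ModuleCat.of R (C ⧸ (I • ⊤ : Submodule R C)) ⟶
      ModuleCat.of R (C ⧸ ((I ⊔ Ideal.span {r}) • ⊤ : Submodule R C)) :=
    ModuleCat.ofHom (qmap (C := C) I r) with hq_def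
  constructor
  -- part (a)
  · intro s hs
    have h : ∀ c : C, ∃ m : C ⧸ (I • ⊤ : Submodule R C),
        r • m = ((I • ⊤ : Submodule R C).mkQ ∘ₗ LinearMap.lsmul R C s) c := by
      intro c
      obtain ⟨m, hm⟩ := mem_sup_span_smul.mp (hs c)
      refine ⟨Submodule.Quotient.mk m, ?_⟩
      rw [← Submodule.Quotient.mk_smul]
      simp only [LinearMap.comp_apply, LinearMap.lsmul_apply, Submodule.mkQ_apply]
      exact ((Submodule.Quotient.eq _).mpr hm).symm
    obtain ⟨g', hg'⟩ := exists_smul_eq_of_regular hr _ h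
    obtain ⟨t, ht⟩ := G.b g'
    have key : ∀ c : C, (s - r * t) • c ∈ (I • ⊤ : Submodule R C) := by
      intro c
      have h1 : r • g' c = Submodule.Quotient.mk (s • c) := hg' c
      rw [ht c, smul_smul, ← Submodule.Quotient.mk_smul] at h1
      have h2 := (Submodule.Quotient.eq (I • ⊤ : Submodule R C)).mp h1
      have h3 := Submodule.neg_mem _ h2
      rw [sub_smul]
      simpa [neg_sub] using h3
    have hsI := G.a _ key
    have hs2 : s = (s - r * t) + r * t := by ring
    rw [hs2]
    exact Ideal.add_mem _ (Ideal.mem_sup_left hsI)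
      (Ideal.mem_sup_right (Ideal.mem_span_singleton.mpr ⟨t, rfl⟩))
  -- part (b)
  · intro f
    set fh : ModuleCat.of R C ⟶
        ModuleCat.of R (C ⧸ ((I ⊔ Ideal.span {r}) • ⊤ : Submodule R C)) :=
      ModuleCat.ofHom f with hfh_def
    set φ0 := aug P ≫ fh with hφ0_def
    set ψ0 := Projective.factorThru φ0 q with hψ0_def
    have hψ0 : ψ0 ≫ q = φ0 := Projective.factorThru_comp _ _
    set χ' := P.complex.d 1 0 ≫ ψ0 with hχ'_def
    have hχ'q : ∀ x, qmap I r (χ' x) = 0 := by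
      intro x
      have h1 : χ' ≫ q = 0 := by
        rw [hχ'_def, Category.assoc, hψ0, hφ0_def, ← Category.assoc, d_comp_aug,
          Limits.zero_comp]
      have h2 := hom_apply_eq h1 x
      exact h2
    have hker : ∀ x, ∃ m, r • m = χ' x := fun x => qmap_ker (hχ'q x)
    obtain ⟨χ, hχ⟩ := exists_smul_eq_of_regular hr χ'.hom hker
    have hχd : P.complex.d 2 1 ≫ ModuleCat.ofHom χ = 0 := by
      apply ModuleCat.hom_ext
      apply LinearMap.ext
      intro y
      apply hr
      show r • χ (P.complex.d 2 1 y) = _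
      rw [hχ]
      have h2 : P.complex.d 2 1 ≫ χ' = 0 := by
        rw [hχ'_def, ← Category.assoc, HomologicalComplex.d_comp_d, Limits.zero_comp]
      have h3 := hom_apply_eq h2 y
      simpa using h3
    obtain ⟨ξ, hξ⟩ := G.e 0 (ModuleCat.ofHom χ) hχd
    set ψ0' := ψ0 - r • ξ with hψ0'_def
    have hψ0'd : ∀ x, ψ0' (P.complex.d 1 0 x) = 0 := by
      intro x
      have h1 : ψ0' (P.complex.d 1 0 x) = χ' x - r • (ξ (P.complex.d 1 0 x)) := rfl
      have h2 : ξ (P.complex.d 1 0 x) = χ x := by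
        have h3 := hom_apply_eq hξ x
        simpa using h3
      rw [h1, h2, sub_eq_zero]
      exact (hχ x).symm
    have hkill : ∀ x, aug P x = 0 → ψ0' x = 0 := by
      intro x hx
      obtain ⟨y, rfl⟩ := exact_aug P x hx
      exact hψ0'd y
    obtain ⟨f', hf'⟩ := exists_factor_of_surjective (aug P).hom (aug_surjective P)
      ψ0'.hom hkill
    obtain ⟨t, ht⟩ := G.b f'
    refine ⟨t, fun c => ?_⟩
    -- `q ∘ f' = f`
    have hqf' : ∀ c : C, qmap I r (f' c) = f c := by
      have hcomp : ∀ x, qmap I r (f' (aug P x)) = f (aug P x) := by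
        intro x
        have h1 : f' (aug P x) = ψ0' x := by
          have h3 := congrArg (fun (g : ↑(P.complex.X 0) →ₗ[R] (C ⧸ (I • ⊤ : Submodule R C))) => g x) hf'
          simpa using h3
        have h2 : qmap I r (ψ0' x) = f (aug P x) := by
          have h3 : ψ0' ≫ q = φ0 := by
            rw [hψ0'_def, Preadditive.sub_comp, Linear.smul_comp,
              smul_hom_sup_zero (ξ ≫ q), sub_zero, hψ0]
          have h4 := hom_apply_eq h3 x
          exact h4
        rw [h1, h2]
      intro c
      obtain ⟨x, rfl⟩ := aug_surjective P c
      exact hcomp x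
    have h5 := congrArg (qmap (C := C) I r) (ht c)
    rw [map_smul, qmap_mk] at h5
    exact (hqf' c).symm.trans h5
  -- part (e)
  · intro k φ hφ
    set φt := Projective.factorThru φ q with hφt_def
    have hφt : φt ≫ q = φ := Projective.factorThru_comp _ _
    set χ' := P.complex.d (k + 2) (k + 1) ≫ φt with hχ'_def
    have hχ'q : ∀ x, qmap I r (χ' x) = 0 := by
      intro x
      have h1 : χ' ≫ q = 0 := by
        rw [hχ'_def, Category.assoc, hφt, hφ]
      have h2 := hom_apply_eq h1 x
      exact h2
    obtain ⟨χ, hχ⟩ := exists_smul_eq_of_regular hr χ'.hom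
      (fun x => qmap_ker (hχ'q x))
    have hχd : P.complex.d (k + 3) (k + 2) ≫ ModuleCat.ofHom χ = 0 := by
      apply ModuleCat.hom_ext
      apply LinearMap.ext
      intro y
      apply hr
      show r • χ (P.complex.d (k + 3) (k + 2) y) = _
      rw [hχ]
      have h2 : P.complex.d (k + 3) (k + 2) ≫ χ' = 0 := by
        rw [hχ'_def, ← Category.assoc, HomologicalComplex.d_comp_d, Limits.zero_comp]
      have h3 := hom_apply_eq h2 y
      simpa using h3
    obtain ⟨ξ, hξ⟩ := G.e (k + 1) (ModuleCat.ofHom χ) hχd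
    set φt' := φt - r • ξ with hφt'_def
    have hφt'd : P.complex.d (k + 2) (k + 1) ≫ φt' = 0 := by
      apply ModuleCat.hom_ext
      apply LinearMap.ext
      intro x
      have h1 : φt' (P.complex.d (k + 2) (k + 1) x) = χ' x - r • (ξ (P.complex.d (k + 2) (k + 1) x)) := rfl
      have h2 : ξ (P.complex.d (k + 2) (k + 1) x) = χ x := by
        have h3 := hom_apply_eq hξ x
        simpa using h3
      show φt' (P.complex.d (k + 2) (k + 1) x) = 0
      rw [h1, h2, sub_eq_zero]
      exact (hχ x).symm
    obtain ⟨ψt, hψt⟩ := G.e k φt' hφt'd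
    refine ⟨ψt ≫ q, ?_⟩
    rw [← Category.assoc, hψt, hφt'_def, Preadditive.sub_comp, Linear.smul_comp,
      smul_hom_sup_zero (ξ ≫ q), sub_zero, hφt]

end Step

lemma eLift_congr {k : ℕ} {N N' : ModuleCat.{u} R} (e : N ≅ N') (h : ELift P k N) :
    ELift P k N' := by
  intro φ hφ
  obtain ⟨ψ, hψ⟩ := h (φ ≫ e.inv) (by rw [← Category.assoc, hφ, Limits.zero_comp])
  refine ⟨ψ ≫ e.hom, ?_⟩
  rw [← Category.assoc, hψ, Category.assoc, Iso.inv_hom_id, Category.comp_id]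

lemma semiGood_bot (hbij : Function.Bijective (LinearMap.lsmul R C))
    (hext : ∀ i : ℕ, 0 < i → Subsingleton (((Ext R (ModuleCat.{u} R) i).obj
      (Opposite.op (ModuleCat.of R C))).obj (ModuleCat.of R C))) :
    SemiGood P ⊥ := by
  have hbot : ((⊥ : Ideal R) • ⊤ : Submodule R C) = ⊥ := by
    rw [Submodule.bot_smul]
  let e : (C ⧸ ((⊥ : Ideal R) • ⊤ : Submodule R C)) ≃ₗ[R] C :=
    Submodule.quotEquivOfEqBot _ hbot
  constructor
  · intro s hs
    rw [Submodule.mem_bot]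
    apply hbij.1
    apply LinearMap.ext
    intro c
    have h1 := hs c
    rw [hbot, Submodule.mem_bot] at h1
    simpa using h1
  · intro f
    obtain ⟨s, hs⟩ := hbij.2 (e.toLinearMap ∘ₗ f)
    refine ⟨s, fun c => ?_⟩
    have h1 : e (f c) = s • c := by
      have h2 := congrArg (fun g : C →ₗ[R] C => g c) hs
      exact (by simpa using h2 : s • c = e (f c)).symm
    have h2 : f c = e.symm (s • c) := by rw [← h1, LinearEquiv.symm_apply_apply]
    rw [h2, map_smul]
    congr 1
  · intro k
    exact eLift_congr P (LinearEquiv.toModuleIso e.symm)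
      (eLift_of_subsingleton_ext P k (hext (k + 1) (Nat.succ_pos k)))


section Main2
open RingTheory.Sequence

lemma isSMulRegular_of_ker {M : Type u} [AddCommGroup M] [Module R M] {a : R}
    (h : ∀ x : M, a • x = 0 → x = 0) : IsSMulRegular M a := by
  intro x y hxy
  have hxy' : a • x = a • y := hxy
  have h1 : a • (x - y) = 0 := by rw [smul_sub, hxy', sub_self]
  have := h _ h1
  rwa [sub_eq_zero] at this

lemma ker_of_isSMulRegular {M : Type u} [AddCommGroup M] [Module R M] {a : R}
    (h : IsSMulRegular M a) : ∀ x : M, a • x = 0 → x = 0 := by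
  intro x hx
  apply h
  show a • x = a • 0
  rw [hx, smul_zero]

lemma ofList_append_singleton (rs : List R) (a : R) :
    Ideal.ofList (rs ++ [a]) = Ideal.ofList rs ⊔ Ideal.span {a} := by
  rw [Ideal.ofList_append, Ideal.ofList_cons, Ideal.ofList_nil, sup_bot_eq]

lemma smul_top_ideal (I : Ideal R) : I • (⊤ : Submodule R R) = I := by
  apply le_antisymm
  · refine Submodule.smul_le.mpr fun r hr n _ => ?_
    simpa [smul_eq_mul] using I.mul_mem_right n hr
  · intro x hx
    have h1 := Submodule.smul_mem_smul hx (Submodule.mem_top (x := (1 : R)))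
    simpa using h1

variable [IsNoetherianRing R] [Module.Finite R C]

lemma nzdCofR {I : Ideal R} (G : SemiGood P I) {a : R}
    (hr : ∀ s, a * s ∈ I → s ∈ I) :
    ∀ x : C ⧸ (I • ⊤ : Submodule R C), a • x = 0 → x = 0 := by
  haveI : Module.Finite R (C ⧸ (I • ⊤ : Submodule R C)) := Module.Finite.quotient R _
  refine nzd_transfer I ?_ ?_ ?_ hr
  · intro b hb m
    obtain ⟨c, rfl⟩ := Submodule.Quotient.mk_surjective _ m
    rw [← Submodule.Quotient.mk_smul, Submodule.Quotient.mk_eq_zero]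
    exact Submodule.smul_mem_smul hb Submodule.mem_top
  · intro s hs
    refine G.a s fun c => ?_
    have h1 := hs (Submodule.Quotient.mk c)
    rwa [← Submodule.Quotient.mk_smul, Submodule.Quotient.mk_eq_zero] at h1
  · intro f
    obtain ⟨s, hs⟩ := G.b (f ∘ₗ (I • (⊤ : Submodule R C)).mkQ)
    refine ⟨s, fun m => ?_⟩
    obtain ⟨c, rfl⟩ := Submodule.Quotient.mk_surjective _ m
    exact hs c

lemma semiGood_ofList
    (hbij : Function.Bijective (LinearMap.lsmul R C))
    (hext : ∀ i : ℕ, 0 < i → Subsingleton (((Ext R (ModuleCat.{u} R) i).obj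
      (Opposite.op (ModuleCat.of R C))).obj (ModuleCat.of R C))) :
    ∀ rs : List R, IsWeaklyRegular C rs → SemiGood P (Ideal.ofList rs) := by
  intro rs
  induction rs using List.reverseRecOn with
  | nil =>
      intro _
      rw [Ideal.ofList_nil]
      exact semiGood_bot P hbij hext
  | append_singleton rs a ih =>
      intro hW
      obtain ⟨h1, h2⟩ := (isWeaklyRegular_append_iff C rs [a]).mp hW
      have h3 : IsSMulRegular (C ⧸ (Ideal.ofList rs • ⊤ : Submodule R C)) a :=
        (isWeaklyRegular_singleton_iff _ a).mp h2
      rw [ofList_append_singleton]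
      exact semiGood_step P (ih h1) (ker_of_isSMulRegular h3)

include P in
lemma weak_iff
    (hbij : Function.Bijective (LinearMap.lsmul R C))
    (hext : ∀ i : ℕ, 0 < i → Subsingleton (((Ext R (ModuleCat.{u} R) i).obj
      (Opposite.op (ModuleCat.of R C))).obj (ModuleCat.of R C)))
    (rs : List R) : IsWeaklyRegular R rs ↔ IsWeaklyRegular C rs := by
  induction rs using List.reverseRecOn with
  | nil => exact ⟨fun _ => IsWeaklyRegular.nil R C, fun _ => IsWeaklyRegular.nil R R⟩
  | append_singleton rs a ih =>
      rw [isWeaklyRegular_append_iff R rs [a], isWeaklyRegular_append_iff C rs [a],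
        isWeaklyRegular_singleton_iff, isWeaklyRegular_singleton_iff]
      constructor
      · rintro ⟨h1, h2⟩
        have hC1 := ih.mp h1
        have G := semiGood_ofList P hbij hext rs hC1
        have hr : ∀ s, a * s ∈ Ideal.ofList rs → s ∈ Ideal.ofList rs := by
          intro s hs
          have h4 : a • (Submodule.Quotient.mk s :
              R ⧸ (Ideal.ofList rs • ⊤ : Submodule R R)) = 0 := by
            rw [← Submodule.Quotient.mk_smul, Submodule.Quotient.mk_eq_zero,
              smul_top_ideal, smul_eq_mul]
            exact hs
          have h5 := ker_of_isSMulRegular h2 _ h4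
          rwa [Submodule.Quotient.mk_eq_zero, smul_top_ideal] at h5
        exact ⟨hC1, isSMulRegular_of_ker (nzdCofR P G hr)⟩
      · rintro ⟨h1, h2⟩
        have hR1 := ih.mpr h1
        have G := semiGood_ofList P hbij hext rs h1
        refine ⟨hR1, isSMulRegular_of_ker ?_⟩
        intro x hx
        obtain ⟨s, rfl⟩ := Submodule.Quotient.mk_surjective _ x
        rw [← Submodule.Quotient.mk_smul, Submodule.Quotient.mk_eq_zero,
          smul_top_ideal] at hx
        rw [Submodule.Quotient.mk_eq_zero, smul_top_ideal]
        refine G.a s fun c => ?_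
        have h4 : a • (Submodule.Quotient.mk (s • c) :
            C ⧸ (Ideal.ofList rs • ⊤ : Submodule R C)) = 0 := by
          rw [← Submodule.Quotient.mk_smul, Submodule.Quotient.mk_eq_zero, smul_smul]
          exact Submodule.smul_mem_smul hx Submodule.mem_top
        have h5 := ker_of_isSMulRegular h2 _ h4
        rwa [Submodule.Quotient.mk_eq_zero] at h5

end Main2

lemma top_cond [Module.Finite R C]
    (hfaith : ∀ s : R, (∀ c : C, s • c = 0) → s = 0) (I : Ideal R) :
    ((⊤ : Submodule R R) = I • ⊤) ↔ ((⊤ : Submodule R C) = I • ⊤) := by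
  rw [smul_top_ideal]
  constructor
  · intro h
    apply le_antisymm ?_ le_top
    intro c _
    have h1 : (1 : R) ∈ I := by rw [← h]; trivial
    have h2 := Submodule.smul_mem_smul h1 (Submodule.mem_top (x := c))
    simpa using h2
  · intro h
    obtain ⟨x, hx1, hx2⟩ := Submodule.exists_sub_one_mem_and_smul_eq_zero_of_fg_of_le_smul I
      (⊤ : Submodule R C) Module.Finite.fg_top h.le
    have hx0 : x = 0 := hfaith x fun c => hx2 c trivial
    rw [hx0, zero_sub] at hx1
    have h1 : (1 : R) ∈ I := by
      have := I.neg_mem hx1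
      simpa using this
    exact (Ideal.eq_top_iff_one I).mpr h1 |>.symm


end Res
end Stmt7Aux

theorem stmt7 [IsNoetherianRing R] (C : Type u) [AddCommGroup C] [Module R C]
    (hC : IsSemidualizing R C) (rs : List R) :
    RingTheory.Sequence.IsRegular R rs ↔ RingTheory.Sequence.IsRegular C rs := by
  obtain ⟨hfin, hbij, hext⟩ := hC
  haveI := hfin
  have hfaith : ∀ s : R, (∀ c : C, s • c = 0) → s = 0 := by
    intro s hs
    have h1 : LinearMap.lsmul R C s = LinearMap.lsmul R C 0 := by
      apply LinearMap.ext
      intro c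
      simpa using hs c
    exact hbij.1 h1
  let P : ProjectiveResolution (ModuleCat.of R C) :=
    (HasProjectiveResolution.out (Z := ModuleCat.of R C)).some
  rw [RingTheory.Sequence.isRegular_iff, RingTheory.Sequence.isRegular_iff]
  exact and_congr (weak_iff P hbij hext rs) (not_congr (top_cond hfaith _))
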